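/- Let p and q be opposite projective points of a generalized quadrangle Γ. Then the map θ_{p,q} sending a point x of the perp-plane Γ_p (i.e., a point x collinear with p) to the block {q,x}^⊥ of Γ_q, and sending a block α of Γ_p to the unique point α^⊥⊥ ∩ q^⊥ of Γ_q, is a well-defined isomorphism from Γ_p to the dual of Γ_q. In particular, for a projective point p and a block α of Γ_p, and a point q opposite p, there is a unique point a collinear with q that is collinear with all points of α. -/
import Mathlib


/-- A (thick) generalized quadrangle. -/
structure GenQuadrangle where
  P : Type
  Ln : Type
  inc : P → Ln → Prop
  /-- (PL): no pair of distinct points is incident with a pair of distinct lines -/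
  pl : ∀ ⦃x y : P⦄ ⦃l m : Ln⦄, inc x l → inc y l → inc x m → inc y m → x = y ∨ l = m
  /-- thickness: every point is incident with at least three lines -/
  thickPt : ∀ x : P, ∃ l₁ l₂ l₃ : Ln, l₁ ≠ l₂ ∧ l₁ ≠ l₃ ∧ l₂ ≠ l₃ ∧
    inc x l₁ ∧ inc x l₂ ∧ inc x l₃
  /-- thickness: every line is incident with at least three points -/
  thickLn : ∀ l : Ln, ∃ x₁ x₂ x₃ : P, x₁ ≠ x₂ ∧ x₁ ≠ x₃ ∧ x₂ ≠ x₃ ∧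
    inc x₁ l ∧ inc x₂ l ∧ inc x₃ l
  /-- (GQ): for every non-incident point-line pair (x,l) there are a unique point y
  and a unique line m with x I m I y I l -/
  gq : ∀ (x : P) (l : Ln), ¬ inc x l → ∃! q : P × Ln, inc x q.2 ∧ inc q.1 q.2 ∧ inc q.1 l

namespace GenQuadrangle

variable (G : GenQuadrangle)

/-- Two points are collinear if some line is incident with both. -/
def collinear (x y : G.P) : Prop := ∃ l : G.Ln, G.inc x l ∧ G.inc y l

/-- Two points are opposite if they are not collinear. -/
def opp (x y : G.P) : Prop := ¬ G.collinear x y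

/-- The perp {x,y}^⊥ of a pair of points. -/
def perp (x y : G.P) : Set G.P := {z | G.collinear z x ∧ G.collinear z y}

/-- X^⊥ for a set of points X. -/
def perpSet (S : Set G.P) : Set G.P := {z | ∀ u ∈ S, G.collinear z u}

/-- The span {x,y}^⊥⊥ of a pair of points. -/
def span (x y : G.P) : Set G.P := G.perpSet (G.perp x y)

/-- A point x is regular if every span {x,y}^⊥⊥ (y opposite x) is a perp of a pair
of opposite points. -/
def regular (x : G.P) : Prop :=
  ∀ y : G.P, G.opp x y → ∃ u v : G.P, G.opp u v ∧ G.span x y = G.perp u v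

/-- A point x is projective if it is regular and every pair of distinct perps
through x meets in a unique point (i.e. the dual net Γ*_x is a dual affine plane). -/
def projective (x : G.P) : Prop :=
  G.regular x ∧ ∀ y z : G.P, G.opp x y → G.opp x z → G.perp x y ≠ G.perp x z →
    ∃! w : G.P, w ∈ G.perp x y ∧ w ∈ G.perp x z

/-- A triad: three pairwise opposite points. -/
def triad (x y z : G.P) : Prop := G.opp x y ∧ G.opp y z ∧ G.opp x z

/-- A center of a triad: a point collinear with all three. -/
def center (w x y z : G.P) : Prop := G.collinear w x ∧ G.collinear w y ∧ G.collinear w z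

end GenQuadrangle

namespace GenQuadrangle

variable {G : GenQuadrangle}

lemma coll_refl (x : G.P) : G.collinear x x := by
  obtain ⟨l, -, -, -, -, -, hl, -, -⟩ := G.thickPt x
  exact ⟨l, hl, hl⟩

lemma coll_symm {x y : G.P} (h : G.collinear x y) : G.collinear y x := by
  obtain ⟨l, h1, h2⟩ := h; exact ⟨l, h2, h1⟩

/-- no triangles: a point collinear with two distinct points of a line is on the line -/
lemma inc_of_coll_two {x y z : G.P} {l : G.Ln} (hxy : x ≠ y) (hx : G.inc x l)
    (hy : G.inc y l) (hzx : G.collinear z x) (hzy : G.collinear z y) : G.inc z l := by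
  by_cases hz : G.inc z l
  · exact hz
  · obtain ⟨m, hzm, hxm⟩ := hzx
    obtain ⟨n, hzn, hyn⟩ := hzy
    obtain ⟨pr, -, huniq⟩ := G.gq z l hz
    have h1 := huniq (x, m) ⟨hzm, hxm, hx⟩
    have h2 := huniq (y, n) ⟨hzn, hyn, hy⟩
    exact absurd (congrArg Prod.fst (h1.trans h2.symm)) hxy

/-- a trace of an opposite pair contains three distinct points -/
lemma perp_three {x y : G.P} (h : G.opp x y) :
    ∃ z₁ z₂ z₃ : G.P, z₁ ≠ z₂ ∧ z₁ ≠ z₃ ∧ z₂ ≠ z₃ ∧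
      z₁ ∈ G.perp x y ∧ z₂ ∈ G.perp x y ∧ z₃ ∈ G.perp x y := by
  obtain ⟨l₁, l₂, l₃, h12, h13, h23, i1, i2, i3⟩ := G.thickPt x
  have key : ∀ l : G.Ln, G.inc x l → ∃ z : G.P, G.inc z l ∧ G.collinear z y := by
    intro l hxl
    have hyl : ¬ G.inc y l := fun hyl => h ⟨l, hxl, hyl⟩
    obtain ⟨⟨z, m⟩, ⟨hym, hzm, hzl⟩, -⟩ := G.gq y l hyl
    exact ⟨z, hzl, ⟨m, hzm, hym⟩⟩
  obtain ⟨z₁, hz1, hc1⟩ := key l₁ i1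
  obtain ⟨z₂, hz2, hc2⟩ := key l₂ i2
  obtain ⟨z₃, hz3, hc3⟩ := key l₃ i3
  have hzx : ∀ (z : G.P) (l : G.Ln), G.inc z l → G.inc x l → G.collinear z y → z ≠ x := by
    intro z l _ _ hzy hzxeq
    exact h (hzxeq ▸ hzy)
  have hne : ∀ (za zb : G.P) (la lb : G.Ln), la ≠ lb → G.inc za la → G.inc zb lb →
      G.inc x la → G.inc x lb → G.collinear za y → za ≠ zb := by
    intro za zb la lb hll ha hb hxa hxb hay heq
    rcases G.pl ha hxa (heq ▸ hb) hxb with h' | h'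
    · exact h (h' ▸ hay)
    · exact hll h'
  refine ⟨z₁, z₂, z₃, hne z₁ z₂ l₁ l₂ h12 hz1 hz2 i1 i2 hc1,
    hne z₁ z₃ l₁ l₃ h13 hz1 hz3 i1 i3 hc1,
    hne z₂ z₃ l₂ l₃ h23 hz2 hz3 i2 i3 hc2,
    ⟨⟨l₁, hz1, i1⟩, hc1⟩, ⟨⟨l₂, hz2, i2⟩, hc2⟩, ⟨⟨l₃, hz3, i3⟩, hc3⟩⟩

/-- distinct points of a trace are opposite -/
lemma perp_pairwise_opp {x y z₁ z₂ : G.P} (h : G.opp x y) (h1 : z₁ ∈ G.perp x y)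
    (h2 : z₂ ∈ G.perp x y) (hne : z₁ ≠ z₂) : G.opp z₁ z₂ := by
  rintro ⟨l, hl1, hl2⟩
  have hx : G.inc x l := inc_of_coll_two hne hl1 hl2 (coll_symm h1.1) (coll_symm h2.1)
  have hy : G.inc y l := inc_of_coll_two hne hl1 hl2 (coll_symm h1.2) (coll_symm h2.2)
  exact h ⟨l, hx, hy⟩

/-- KEY: if p is projective and w is collinear with two distinct points of a trace
{p,y}^⊥, then w lies in the span {p,y}^⊥⊥. -/
lemma mem_span_of_two {p y w z₁ z₂ : G.P} (hp : G.projective p) (hpy : G.opp p y)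
    (h1 : z₁ ∈ G.perp p y) (h2 : z₂ ∈ G.perp p y) (hne : z₁ ≠ z₂)
    (hw1 : G.collinear w z₁) (hw2 : G.collinear w z₂) : w ∈ G.span p y := by
  by_cases hwp : G.collinear w p
  · by_cases hweq : w = p
    · intro u hu; exact hweq ▸ coll_symm hu.1
    · exfalso
      obtain ⟨l, hwl, hpl⟩ := hwp
      have i1 : G.inc z₁ l := inc_of_coll_two hweq hwl hpl (coll_symm hw1) h1.1
      have i2 : G.inc z₂ l := inc_of_coll_two hweq hwl hpl (coll_symm hw2) h2.1
      exact perp_pairwise_opp hpy h1 h2 hne ⟨l, i1, i2⟩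
  · have hop : G.opp p w := fun c => hwp (coll_symm c)
    have m1 : z₁ ∈ G.perp p w := ⟨h1.1, coll_symm hw1⟩
    have m2 : z₂ ∈ G.perp p w := ⟨h2.1, coll_symm hw2⟩
    by_cases heq : G.perp p w = G.perp p y
    · intro u hu
      have : u ∈ G.perp p w := heq ▸ hu
      exact coll_symm this.2
    · obtain ⟨c, -, huniq⟩ := hp.2 w y hop hpy heq
      have e1 := huniq z₁ ⟨m1, h1⟩
      have e2 := huniq z₂ ⟨m2, h2⟩
      exact absurd (e1.trans e2.symm) hne

/-- if a ∈ {p,y}^⊥⊥ with a ≠ p (p projective, y opp p), then a is opposite p and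
{p,a}^⊥ = {p,y}^⊥ -/
lemma span_perp_eq {p y a : G.P} (hp : G.projective p) (hpy : G.opp p y)
    (ha : a ∈ G.span p y) (hne : a ≠ p) : G.opp p a ∧ G.perp p a = G.perp p y := by
  obtain ⟨z₁, z₂, -, h12, -, -, h1, h2, -⟩ := perp_three hpy
  have hopa : G.opp p a := by
    rintro ⟨l, hpl, hal⟩
    have i1 : G.inc z₁ l := inc_of_coll_two hne hal hpl (coll_symm (ha z₁ h1)) h1.1
    have i2 : G.inc z₂ l := inc_of_coll_two hne hal hpl (coll_symm (ha z₂ h2)) h2.1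
    exact perp_pairwise_opp hpy h1 h2 h12 ⟨l, i1, i2⟩
  refine ⟨hopa, ?_⟩
  have hsub : G.perp p y ⊆ G.perp p a := fun u hu => ⟨hu.1, coll_symm (ha u hu)⟩
  by_contra hne2
  obtain ⟨c, -, huniq⟩ := hp.2 a y hopa hpy hne2
  have e1 := huniq z₁ ⟨hsub h1, h1⟩
  have e2 := huniq z₂ ⟨hsub h2, h2⟩
  exact h12 (e1.trans e2.symm)

/-- distinct points of a span are opposite -/
lemma span_pairwise_opp {p y a b : G.P} (hpy : G.opp p y)
    (ha : a ∈ G.span p y) (hb : b ∈ G.span p y) (hne : a ≠ b) : G.opp a b := by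
  rintro ⟨l, hal, hbl⟩
  obtain ⟨z₁, z₂, -, h12, -, -, h1, h2, -⟩ := perp_three hpy
  have i1 : G.inc z₁ l := inc_of_coll_two hne hal hbl (coll_symm (ha z₁ h1)) (coll_symm (hb z₁ h1))
  have i2 : G.inc z₂ l := inc_of_coll_two hne hal hbl (coll_symm (ha z₂ h2)) (coll_symm (hb z₂ h2))
  exact perp_pairwise_opp hpy h1 h2 h12 ⟨l, i1, i2⟩

/-- DUAL KEY: if p is projective and w is collinear with two distinct points of a span
{p,y}^⊥⊥, then w lies in the trace {p,y}^⊥. -/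
lemma mem_perp_of_two_span {p y a b w : G.P} (hp : G.projective p) (hpy : G.opp p y)
    (ha : a ∈ G.span p y) (hb : b ∈ G.span p y) (hne : a ≠ b)
    (hwa : G.collinear w a) (hwb : G.collinear w b) : w ∈ G.perp p y := by
  by_cases hap : a = p
  · subst hap
    have hbp : b ≠ a := Ne.symm hne
    have := (span_perp_eq hp hpy hb hbp).2
    exact this ▸ (⟨hwa, hwb⟩ : w ∈ G.perp a b)
  · by_cases hbp : b = p
    · subst hbp
      have := (span_perp_eq hp hpy ha hap).2
      exact this ▸ (⟨hwb, hwa⟩ : w ∈ G.perp b a)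
    · obtain ⟨hopa, hpa⟩ := span_perp_eq hp hpy ha hap
      obtain ⟨hopb, hpb⟩ := span_perp_eq hp hpy hb hbp
      by_cases hwp : G.collinear w p
      · exact hpa ▸ (⟨hwp, hwa⟩ : w ∈ G.perp p a)
      · exfalso
        have hwa' : w ≠ a := by
          rintro rfl
          exact span_pairwise_opp hpy ha hb hne hwb
        obtain ⟨l, hwl, hal⟩ := hwa
        obtain ⟨m, hwm, hbm⟩ := hwb
        have hlm : l ≠ m := by
          rintro rfl
          exact span_pairwise_opp hpy ha hb hne ⟨l, hal, hbm⟩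
        have hpnl : ¬ G.inc p l := fun hpl => hopa ⟨l, hpl, hal⟩
        have hpnm : ¬ G.inc p m := fun hpm => hopb ⟨m, hpm, hbm⟩
        obtain ⟨⟨c, n⟩, ⟨hpn, hcn, hcl⟩, -⟩ := G.gq p l hpnl
        obtain ⟨⟨d, n'⟩, ⟨hpn', hdn', hdm⟩, -⟩ := G.gq p m hpnm
        have hc : c ∈ G.perp p y := hpa ▸ (⟨⟨n, hcn, hpn⟩, ⟨l, hcl, hal⟩⟩ : c ∈ G.perp p a)
        have hd : d ∈ G.perp p y := hpb ▸ (⟨⟨n', hdn', hpn'⟩, ⟨m, hdm, hbm⟩⟩ : d ∈ G.perp p b)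
        have hcd : c ≠ d := by
          rintro rfl
          rcases G.pl hcl hwl hdm hwm with h' | h'
          · exact hwp (h' ▸ (⟨n, hcn, hpn⟩ : G.collinear c p))
          · exact hlm h'
        have hwspan : w ∈ G.span p y :=
          mem_span_of_two hp hpy hc hd hcd ⟨l, hwl, hcl⟩ ⟨m, hwm, hdm⟩
        exact span_pairwise_opp hpy hwspan ha hwa' ⟨l, hwl, hal⟩

/-- trace of a collinear pair = point row of the joining line -/
lemma perp_row {x y : G.P} {l : G.Ln} (hne : x ≠ y) (hx : G.inc x l) (hy : G.inc y l) :
    G.perp x y = {z | G.inc z l} := by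
  ext z
  constructor
  · rintro ⟨hzx, hzy⟩
    exact inc_of_coll_two hne hx hy hzx hzy
  · intro hz
    exact ⟨⟨l, hz, hx⟩, ⟨l, hz, hy⟩⟩

/-- existence and uniqueness of the pole of a block of Γ_p with respect to q -/
lemma pole_exists_unique {p q : G.P} (hopp : G.opp p q)
    (hp : G.projective p) (hq : G.projective q) :
    ∀ α : Set G.P, (∃ y : G.P, y ≠ p ∧ α = G.perp p y) →
      ∃! a : G.P, G.collinear a q ∧ ∀ z ∈ α, G.collinear a z := by
  rintro α ⟨y, hyp, rfl⟩
  by_cases hcol : G.collinear p y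
  · -- α is the row of the line through p and y
    obtain ⟨l, hpl, hyl⟩ := hcol
    have hrow : G.perp p y = {z | G.inc z l} := perp_row (Ne.symm hyp) hpl hyl
    have hql : ¬ G.inc q l := fun h => hopp ⟨l, hpl, h⟩
    obtain ⟨⟨a, n⟩, ⟨hqn, han, hal⟩, huniq⟩ := G.gq q l hql
    refine ⟨a, ⟨⟨n, han, hqn⟩, ?_⟩, ?_⟩
    · intro z hz
      rw [hrow] at hz
      exact ⟨l, hal, hz⟩
    · rintro a' ⟨ha'q, ha'z⟩
      have hpmem : p ∈ G.perp p y := ⟨coll_refl p, ⟨l, hpl, hyl⟩⟩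
      have hymem : y ∈ G.perp p y := ⟨⟨l, hyl, hpl⟩, coll_refl y⟩
      have h1 : G.inc a' l :=
        inc_of_coll_two (Ne.symm hyp) hpl hyl (ha'z p hpmem) (ha'z y hymem)
      obtain ⟨m, ha'm, hqm⟩ := ha'q
      exact congrArg Prod.fst (huniq (a', m) ⟨hqm, ha'm, h1⟩)
  · -- α is a trace
    have hpy : G.opp p y := hcol
    have uniq : ∀ a a' : G.P,
        (G.collinear a q ∧ ∀ z ∈ G.perp p y, G.collinear a z) →
        (G.collinear a' q ∧ ∀ z ∈ G.perp p y, G.collinear a' z) → a = a' := by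
      rintro a a' ⟨haq, haz⟩ ⟨ha'q, ha'z⟩
      by_contra hne
      have hqmem : q ∈ G.perp p y :=
        mem_perp_of_two_span hp hpy (fun u hu => haz u hu) (fun u hu => ha'z u hu) hne
          (coll_symm haq) (coll_symm ha'q)
      exact hopp (coll_symm hqmem.1)
    obtain ⟨z₁, z₂, z₃, h12, h13, h23, hz₁, hz₂, hz₃⟩ := perp_three hpy
    have mainOpp : ∀ zA zB : G.P, zA ∈ G.perp p y → zB ∈ G.perp p y → zA ≠ zB →
        G.opp q zA → G.opp q zB →
        ∃ a : G.P, G.collinear a q ∧ ∀ z ∈ G.perp p y, G.collinear a z := by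
      intro zA zB hA hB hAB hqA hqB
      by_cases heq : G.perp q zA = G.perp q zB
      · obtain ⟨w, -, -, -, -, -, hw, -, -⟩ := perp_three hqA
        have hw2 : w ∈ G.perp q zB := heq ▸ hw
        have hws : w ∈ G.span p y :=
          mem_span_of_two hp hpy hA hB hAB hw.2 hw2.2
        exact ⟨w, hw.1, fun z hz => hws z hz⟩
      · obtain ⟨w, hw, -⟩ := hq.2 zA zB hqA hqB heq
        have hws : w ∈ G.span p y :=
          mem_span_of_two hp hpy hA hB hAB hw.1.2 hw.2.2
        exact ⟨w, hw.1.1, fun z hz => hws z hz⟩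
    have mainColl : ∀ zA zB : G.P, zA ∈ G.perp p y → zB ∈ G.perp p y → zA ≠ zB →
        G.collinear zA q → G.collinear zB q →
        ∃ a : G.P, G.collinear a q ∧ ∀ z ∈ G.perp p y, G.collinear a z := by
      intro zA zB hA hB hAB hqA hqB
      have hqs : q ∈ G.span p y :=
        mem_span_of_two hp hpy hA hB hAB (coll_symm hqA) (coll_symm hqB)
      exact ⟨q, coll_refl q, fun z hz => hqs z hz⟩
    have ex : ∃ a : G.P, G.collinear a q ∧ ∀ z ∈ G.perp p y, G.collinear a z := by
      by_cases c1 : G.collinear z₁ q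
      · by_cases c2 : G.collinear z₂ q
        · exact mainColl z₁ z₂ hz₁ hz₂ h12 c1 c2
        · by_cases c3 : G.collinear z₃ q
          · exact mainColl z₁ z₃ hz₁ hz₃ h13 c1 c3
          · exact mainOpp z₂ z₃ hz₂ hz₃ h23 (fun h => c2 (coll_symm h)) (fun h => c3 (coll_symm h))
      · by_cases c2 : G.collinear z₂ q
        · by_cases c3 : G.collinear z₃ q
          · exact mainColl z₂ z₃ hz₂ hz₃ h23 c2 c3
          · exact mainOpp z₁ z₃ hz₁ hz₃ h13 (fun h => c1 (coll_symm h)) (fun h => c3 (coll_symm h))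
        · exact mainOpp z₁ z₂ hz₁ hz₂ h12 (fun h => c1 (coll_symm h)) (fun h => c2 (coll_symm h))
    obtain ⟨a, ha⟩ := ex
    exact ⟨a, ha, fun b hb => uniq b a hb ha⟩

end GenQuadrangle


/-- Let p and q be opposite projective points of a generalized
quadrangle Γ. Then θ_{p,q}, sending a point x of the perp-plane Γ_p to the block
{q,x}^⊥ of Γ_q and a block α of Γ_p to the unique point in α^⊥⊥ ∩ q^⊥, is a
well-defined isomorphism from Γ_p to the dual of Γ_q. In particular, for every
block α of Γ_p there is a unique point a collinear with q and collinear with all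
points of α. -/
theorem theta_pq_isomorphism
    (G : GenQuadrangle) (p q : G.P) (hopp : G.opp p q)
    (hp : G.projective p) (hq : G.projective q) :
    -- well-definedness / "in particular" : each block of Γ_p has a unique
    -- "pole" collinear with q
    (∀ α : Set G.P, (∃ y : G.P, y ≠ p ∧ α = G.perp p y) →
      ∃! a : G.P, G.collinear a q ∧ ∀ z ∈ α, G.collinear a z) ∧
    -- θ_{p,q} is an isomorphism from Γ_p onto the dual of Γ_q
    (∃ (f : {x : G.P // G.collinear x p} →
            {α : Set G.P // ∃ y : G.P, y ≠ q ∧ α = G.perp q y})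
       (g : {α : Set G.P // ∃ y : G.P, y ≠ p ∧ α = G.perp p y} →
            {a : G.P // G.collinear a q}),
      Function.Bijective f ∧ Function.Bijective g ∧
      (∀ x, (f x).1 = G.perp q x.1) ∧
      (∀ α, ∀ z ∈ α.1, G.collinear (g α).1 z) ∧
      (∀ x α, x.1 ∈ α.1 ↔ (g α).1 ∈ (f x).1)) := by
  classical
  have hqp : G.opp q p := fun c => hopp (GenQuadrangle.coll_symm c)
  have pole := GenQuadrangle.pole_exists_unique hopp hp hq
  have pole' := GenQuadrangle.pole_exists_unique hqp hq hp
  refine ⟨pole, ?_⟩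
  refine ⟨fun x => ⟨G.perp q x.1, x.1, fun h => hqp (h ▸ x.2), rfl⟩,
    fun α => ⟨(pole α.1 α.2).choose, (pole α.1 α.2).choose_spec.1.1⟩,
    ⟨?_, ?_⟩, ⟨?_, ?_⟩, fun x => rfl,
    fun α z hz => (pole α.1 α.2).choose_spec.1.2 z hz, ?_⟩
  · -- f injective
    intro x x' hxx
    have hset : G.perp q x.1 = G.perp q x'.1 := congrArg Subtype.val hxx
    obtain ⟨b, -, hbu⟩ := pole' (G.perp q x.1) ⟨x.1, fun h => hqp (h ▸ x.2), rfl⟩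
    have e1 : x.1 = b := hbu x.1 ⟨x.2, fun z hz => GenQuadrangle.coll_symm hz.2⟩
    have e2 : x'.1 = b := hbu x'.1 ⟨x'.2, fun z hz =>
      GenQuadrangle.coll_symm (show z ∈ G.perp q x'.1 from hset ▸ hz).2⟩
    exact Subtype.ext (e1.trans e2.symm)
  · -- f surjective
    intro β
    obtain ⟨y', hy', hβ⟩ := β.2
    obtain ⟨b, ⟨hbp, hbz⟩, -⟩ := pole' β.1 β.2
    have hbq : b ≠ q := fun h => hqp (h ▸ hbp)
    refine ⟨⟨b, hbp⟩, Subtype.ext ?_⟩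
    show G.perp q b = β.1
    rw [hβ] at hbz ⊢
    by_cases hc : G.collinear q y'
    · obtain ⟨l, hql, hy'l⟩ := hc
      have hrow : G.perp q y' = {z | G.inc z l} :=
        GenQuadrangle.perp_row (Ne.symm hy') hql hy'l
      have hqmem : q ∈ G.perp q y' := ⟨GenQuadrangle.coll_refl q, ⟨l, hql, hy'l⟩⟩
      have hymem : y' ∈ G.perp q y' := ⟨⟨l, hy'l, hql⟩, GenQuadrangle.coll_refl y'⟩
      have hbl : G.inc b l :=
        GenQuadrangle.inc_of_coll_two (Ne.symm hy') hql hy'l (hbz q hqmem) (hbz y' hymem)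
      rw [hrow]
      exact GenQuadrangle.perp_row (Ne.symm hbq) hql hbl
    · exact (GenQuadrangle.span_perp_eq hq hc (fun u hu => hbz u hu) hbq).2
  · -- g injective
    intro α α' h
    have heq : (pole α.1 α.2).choose = (pole α'.1 α'.2).choose := congrArg Subtype.val h
    obtain ⟨haq, haz⟩ := (pole α.1 α.2).choose_spec.1
    obtain ⟨-, ha'z⟩ := (pole α'.1 α'.2).choose_spec.1
    rw [← heq] at ha'z
    have hap : (pole α.1 α.2).choose ≠ p := fun h' => hopp (h' ▸ haq)
    obtain ⟨y, hy, hα⟩ := α.2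
    obtain ⟨y', hy', hα'⟩ := α'.2
    have haz' : ∀ z ∈ G.perp p y, G.collinear (pole α.1 α.2).choose z :=
      fun z hz => haz z (hα.symm ▸ hz)
    have ha'z' : ∀ z ∈ G.perp p y', G.collinear (pole α.1 α.2).choose z :=
      fun z hz => ha'z z (hα'.symm ▸ hz)
    clear haz ha'z
    apply Subtype.ext
    rw [hα, hα']
    by_cases hc : G.collinear p y
    · obtain ⟨l, hpl, hyl⟩ := hc
      have hal : G.inc (pole α.1 α.2).choose l :=
        GenQuadrangle.inc_of_coll_two (Ne.symm hy) hpl hyl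
          (haz' p ⟨GenQuadrangle.coll_refl p, ⟨l, hpl, hyl⟩⟩)
          (haz' y ⟨⟨l, hyl, hpl⟩, GenQuadrangle.coll_refl y⟩)
      by_cases hc' : G.collinear p y'
      · obtain ⟨l', hpl', hyl'⟩ := hc'
        have hal' : G.inc (pole α.1 α.2).choose l' :=
          GenQuadrangle.inc_of_coll_two (Ne.symm hy') hpl' hyl'
            (ha'z' p ⟨GenQuadrangle.coll_refl p, ⟨l', hpl', hyl'⟩⟩)
            (ha'z' y' ⟨⟨l', hyl', hpl'⟩, GenQuadrangle.coll_refl y'⟩)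
        rcases G.pl hal hpl hal' hpl' with h' | h'
        · exact absurd h' hap
        · rw [GenQuadrangle.perp_row (Ne.symm hy) hpl hyl,
            GenQuadrangle.perp_row (Ne.symm hy') hpl' hyl', h']
      · exact absurd ⟨l, hpl, hal⟩
          (GenQuadrangle.span_perp_eq hp hc' (fun u hu => ha'z' u hu) hap).1
    · have h1 := (GenQuadrangle.span_perp_eq hp hc (fun u hu => haz' u hu) hap).2
      by_cases hc' : G.collinear p y'
      · obtain ⟨l', hpl', hyl'⟩ := hc'
        have hal' : G.inc (pole α.1 α.2).choose l' :=
          GenQuadrangle.inc_of_coll_two (Ne.symm hy') hpl' hyl'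
            (ha'z' p ⟨GenQuadrangle.coll_refl p, ⟨l', hpl', hyl'⟩⟩)
            (ha'z' y' ⟨⟨l', hyl', hpl'⟩, GenQuadrangle.coll_refl y'⟩)
        exact absurd ⟨l', hpl', hal'⟩
          (GenQuadrangle.span_perp_eq hp hc (fun u hu => haz' u hu) hap).1
      · have h2 := (GenQuadrangle.span_perp_eq hp hc' (fun u hu => ha'z' u hu) hap).2
        rw [← h1, ← h2]
  · -- g surjective
    intro a
    have hap : a.1 ≠ p := fun h => hopp (h ▸ a.2)
    refine ⟨⟨G.perp p a.1, a.1, hap, rfl⟩, Subtype.ext ?_⟩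
    exact ((pole (G.perp p a.1) ⟨a.1, hap, rfl⟩).choose_spec.2 a.1
      ⟨a.2, fun z hz => GenQuadrangle.coll_symm hz.2⟩).symm
  · -- incidence
    intro x α
    obtain ⟨haq, haz⟩ := (pole α.1 α.2).choose_spec.1
    constructor
    · intro hx
      exact ⟨haq, haz x.1 hx⟩
    · rintro ⟨-, hax⟩
      obtain ⟨y, hy, hα⟩ := α.2
      have haz' : ∀ z ∈ G.perp p y, G.collinear (pole α.1 α.2).choose z :=
        fun z hz => haz z (hα.symm ▸ hz)
      rw [hα]
      have hap : (pole α.1 α.2).choose ≠ p := fun h' => hopp (h' ▸ haq)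
      by_cases hc : G.collinear p y
      · obtain ⟨l, hpl, hyl⟩ := hc
        have hal : G.inc (pole α.1 α.2).choose l :=
          GenQuadrangle.inc_of_coll_two (Ne.symm hy) hpl hyl
            (haz' p ⟨GenQuadrangle.coll_refl p, ⟨l, hpl, hyl⟩⟩)
            (haz' y ⟨⟨l, hyl, hpl⟩, GenQuadrangle.coll_refl y⟩)
        have hxl : G.inc x.1 l :=
          GenQuadrangle.inc_of_coll_two hap hal hpl (GenQuadrangle.coll_symm hax) x.2
        exact ⟨⟨l, hxl, hpl⟩, ⟨l, hxl, hyl⟩⟩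
      · have h1 := (GenQuadrangle.span_perp_eq hp hc (fun u hu => haz' u hu) hap).2
        exact h1 ▸ (⟨x.2, GenQuadrangle.coll_symm hax⟩ :
          x.1 ∈ G.perp p (pole α.1 α.2).choose)
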